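/- Let G = (V,E) be a finite simple graph and let u : V → ℝ≥0 be any assignment of nonnegative reals to the vertices. Then Σ_{{i,j}∈E} min{u_i, u_j} ≤ ρ(G) · Σ_{i∈V} u_i. -/
import Mathlib


open Finset
open scoped Classical

variable {V : Type*}

noncomputable def edgesIn [Fintype V] (G : SimpleGraph V) (S : Finset V) : ℕ :=
  (G.edgeFinset.filter fun e => ∀ v ∈ e, v ∈ S).card

noncomputable def maxDensity [Fintype V] (G : SimpleGraph V) : ℝ :=
  ⨆ S : {S : Finset V // S.Nonempty}, (edgesIn G S.1 : ℝ) / (S.1.card : ℝ)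

noncomputable def maxDisparity (G : SimpleGraph V) (α : V → V → ℝ) : ℝ :=
  ⨆ p : {p : V × V // G.Adj p.1 p.2}, α p.1.1 p.1.2 / α p.1.2 p.1.1

noncomputable def util [Fintype V] (G : SimpleGraph V) (coord : V → V → Prop)
    (α w : V → V → ℝ) {c : ℕ} (q : V → Fin c → ℝ) (s : V → Fin c) (i : V) : ℝ :=
  q i (s i) +
    ∑ j ∈ G.neighborFinset i,
      if (coord i j ∧ s i = s j) ∨ (¬ coord i j ∧ s i ≠ s j)
      then α i j / (α i j + α j i) * w i j else 0

noncomputable def welfare [Fintype V] (G : SimpleGraph V) (coord : V → V → Prop)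
    (α w : V → V → ℝ) {c : ℕ} (q : V → Fin c → ℝ) (s : V → Fin c) : ℝ :=
  ∑ i, util G coord α w q s i

def IsNash [Fintype V] (G : SimpleGraph V) (coord : V → V → Prop)
    (α w : V → V → ℝ) {c : ℕ} (q : V → Fin c → ℝ) (s : V → Fin c) : Prop :=
  ∀ (i : V) (k : Fin c),
    util G coord α w q (Function.update s i k) i ≤ util G coord α w q s i

noncomputable def utilA [Fintype V] (G : SimpleGraph V) (w : V → V → ℝ)
    {c : ℕ} (s : V → Fin c) (i : V) : ℝ :=
  ∑ j ∈ G.neighborFinset i, if s i = s j then w i j / 2 else 0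

noncomputable def welfareA [Fintype V] (G : SimpleGraph V) (w : V → V → ℝ)
    {c : ℕ} (s : V → Fin c) : ℝ :=
  ∑ i, utilA G w s i

def IsNashA [Fintype V] (G : SimpleGraph V) (w : V → V → ℝ)
    {c : ℕ} (St : V → Finset (Fin c)) (s : V → Fin c) : Prop :=
  ∀ i, ∀ k ∈ St i, utilA G w (Function.update s i k) i ≤ utilA G w s i

def IsEpsKEq [Fintype V] (G : SimpleGraph V) (w : V → V → ℝ)
    {c : ℕ} (St : V → Finset (Fin c)) (ε : ℝ) (k : ℕ) (s : V → Fin c) : Prop :=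
  ∀ K : Finset V, K.Nonempty → K.card ≤ k →
    ∀ s' : V → Fin c, (∀ i ∈ K, s' i ∈ St i) → (∀ i ∉ K, s' i = s i) →
      ∃ j ∈ K, utilA G w s' j ≤ ε * utilA G w s j

def IsGWS (G : SimpleGraph V) (α : V → V → ℝ) : Prop :=
  ∃ (σ : V → ℕ) (γ : V → ℝ), Function.Injective σ ∧ (∀ i, 0 ≤ γ i) ∧
    ∀ i j, G.Adj i j →
      (α i j = 0 → σ i < σ j) ∧
      (0 < α i j → α i j / (α i j + α j i) = γ i / (γ i + γ j))

def BRStep [Fintype V] (G : SimpleGraph V) (coord : V → V → Prop)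
    (α w : V → V → ℝ) {c : ℕ} (q : V → Fin c → ℝ) (s s' : V → Fin c) : Prop :=
  ∃ i, (∀ j, j ≠ i → s' j = s j) ∧
    util G coord α w q s i < util G coord α w q s' i ∧
    ∀ k : Fin c, util G coord α w q (Function.update s i k) i ≤ util G coord α w q s' i

lemma bddDensity [Fintype V] (G : SimpleGraph V) :
    BddAbove (Set.range fun S : {S : Finset V // S.Nonempty} =>
      (edgesIn G S.1 : ℝ) / (S.1.card : ℝ)) := by
  refine ⟨(G.edgeFinset.card : ℝ), ?_⟩
  rintro x ⟨S, rfl⟩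
  have h1 : (edgesIn G S.1 : ℝ) ≤ (G.edgeFinset.card : ℝ) := by
    exact_mod_cast Finset.card_filter_le _ _
  have h2 : (1 : ℝ) ≤ (S.1.card : ℝ) := by exact_mod_cast S.2.card_pos
  calc (edgesIn G S.1 : ℝ) / (S.1.card : ℝ) ≤ (edgesIn G S.1 : ℝ) :=
        div_le_self (by positivity) h2
    _ ≤ _ := h1

lemma edgesIn_le_density [Fintype V] (G : SimpleGraph V) (S : Finset V) :
    (edgesIn G S : ℝ) ≤ maxDensity G * (S.card : ℝ) := by
  rcases S.eq_empty_or_nonempty with rfl | hS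
  · have : edgesIn G (∅ : Finset V) = 0 := by
      unfold edgesIn
      rw [Finset.card_eq_zero, Finset.filter_eq_empty_iff]
      intro e _
      induction e using Sym2.ind with
      | _ i j =>
        intro h
        exact absurd (h i (Sym2.mem_mk_left i j)) (by simp)
    simp [this]
  · have hle : (edgesIn G S : ℝ) / (S.card : ℝ) ≤ maxDensity G :=
      le_ciSup (bddDensity G) (⟨S, hS⟩ : {S : Finset V // S.Nonempty})
    have hpos : (0 : ℝ) < (S.card : ℝ) := by exact_mod_cast hS.card_pos
    rw [div_le_iff₀ hpos] at hle
    linarith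

lemma stmt2_aux [Fintype V] (G : SimpleGraph V) :
    ∀ (n : ℕ) (u : V → ℝ), (∀ i, 0 ≤ u i) →
      ((univ.filter fun i => 0 < u i).card ≤ n) →
      ∑ e ∈ G.edgeFinset,
          Sym2.lift ⟨fun i j => min (u i) (u j), fun i j => min_comm (u i) (u j)⟩ e
        ≤ maxDensity G * ∑ i, u i := by
  intro n
  induction n with
  | zero =>
    intro u hu hcard
    have hz : ∀ i, u i = 0 := by
      intro i
      by_contra h
      have hi : 0 < u i := lt_of_le_of_ne (hu i) (Ne.symm h)
      have : i ∈ univ.filter fun i => 0 < u i := by simp [hi]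
      have := Finset.card_pos.2 ⟨i, this⟩
      omega
    have h1 : ∑ e ∈ G.edgeFinset,
        Sym2.lift ⟨fun i j => min (u i) (u j), fun i j => min_comm (u i) (u j)⟩ e = 0 := by
      apply Finset.sum_eq_zero
      intro e _
      induction e using Sym2.ind with
      | _ i j => simp [hz]
    rw [h1]
    have h2 : ∑ i, u i = 0 := Finset.sum_eq_zero fun i _ => hz i
    rw [h2, mul_zero]
  | succ n ih =>
    intro u hu hcard
    set S := univ.filter fun i => 0 < u i with hSdef
    by_cases hne : S.Nonempty
    · set m := S.inf' hne u with hm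
      have hmemS : ∀ i, i ∈ S ↔ 0 < u i := by intro i; simp [hSdef]
      have hmpos : 0 < m := by
        rw [hm, Finset.lt_inf'_iff]
        intro i hi
        exact (hmemS i).1 hi
      have hmle : ∀ i ∈ S, m ≤ u i := fun i hi => Finset.inf'_le u hi
      obtain ⟨i0, hi0S, hi0m⟩ := S.exists_mem_eq_inf' hne u
      set u' : V → ℝ := fun i => if 0 < u i then u i - m else 0 with hu'def
      have hu' : ∀ i, 0 ≤ u' i := by
        intro i
        rw [hu'def]
        by_cases h : 0 < u i
        · simp only [h, if_true]
          have := hmle i ((hmemS i).2 h)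
          linarith
        · simp [h]
      have hsupp : (univ.filter fun i => 0 < u' i) ⊆ S.erase i0 := by
        intro i hi
        simp only [Finset.mem_filter] at hi
        have hi' := hi.2
        rw [hu'def] at hi'
        by_cases h : 0 < u i
        · simp only [h, if_true] at hi'
          refine Finset.mem_erase.2 ⟨?_, (hmemS i).2 h⟩
          intro heq
          subst heq
          rw [← hi0m] at hi'
          linarith
        · simp [h] at hi'
      have hcard' : (univ.filter fun i => 0 < u' i).card ≤ n := by
        have h1 := Finset.card_le_card hsupp
        have h2 : (S.erase i0).card = S.card - 1 := Finset.card_erase_of_mem hi0S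
        have h3 : S.card ≤ n + 1 := hcard
        have h4 : 0 < S.card := Finset.card_pos.2 hne
        omega
      -- per-vertex decomposition
      have hvert : ∀ i, u i = u' i + (if 0 < u i then m else 0) := by
        intro i
        rw [hu'def]
        by_cases h : 0 < u i
        · simp [h]
        · have : u i = 0 := le_antisymm (not_lt.1 h) (hu i)
          simp [h, this]
      -- per-edge decomposition
      have hedge : ∀ i j : V, min (u i) (u j)
          = min (u' i) (u' j) + (if (∀ v ∈ (s(i, j) : Sym2 V), v ∈ S) then m else 0) := by
        intro i j
        have hmem : (∀ v ∈ (s(i, j) : Sym2 V), v ∈ S) ↔ (0 < u i ∧ 0 < u j) := by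
          constructor
          · intro h
            exact ⟨(hmemS i).1 (h i (Sym2.mem_mk_left i j)),
                   (hmemS j).1 (h j (Sym2.mem_mk_right i j))⟩
          · rintro ⟨h1, h2⟩ v hv
            rcases Sym2.mem_iff.1 hv with rfl | rfl
            · exact (hmemS v).2 h1
            · exact (hmemS v).2 h2
        by_cases hi : 0 < u i
        · by_cases hj : 0 < u j
          · have : (∀ v ∈ (s(i, j) : Sym2 V), v ∈ S) := hmem.2 ⟨hi, hj⟩
            rw [if_pos this, hu'def]
            simp only [hi, hj, if_true]
            rw [← min_add_add_right]
            ring_nf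
          · have hj0 : u j = 0 := le_antisymm (not_lt.1 hj) (hu j)
            have hnot : ¬ (∀ v ∈ (s(i, j) : Sym2 V), v ∈ S) := by
              rw [hmem]; tauto
            have h1 : min (u i) (u j) = 0 := by rw [hj0, min_eq_right (hu i)]
            have hj0' : u' j = 0 := by rw [hu'def]; simp [hj]
            have h2 : min (u' i) (u' j) = 0 := by rw [hj0', min_eq_right (hu' i)]
            rw [if_neg hnot, h1, h2, add_zero]
        · have hi0 : u i = 0 := le_antisymm (not_lt.1 hi) (hu i)
          have hnot : ¬ (∀ v ∈ (s(i, j) : Sym2 V), v ∈ S) := by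
            rw [hmem]; tauto
          have h1 : min (u i) (u j) = 0 := by rw [hi0, min_eq_left (hu j)]
          have hi0' : u' i = 0 := by rw [hu'def]; simp [hi]
          have h2 : min (u' i) (u' j) = 0 := by rw [hi0', min_eq_left (hu' j)]
          rw [if_neg hnot, h1, h2, add_zero]
      -- split LHS
      have hsplit : ∑ e ∈ G.edgeFinset,
          Sym2.lift ⟨fun i j => min (u i) (u j), fun i j => min_comm (u i) (u j)⟩ e
          = (∑ e ∈ G.edgeFinset,
              Sym2.lift ⟨fun i j => min (u' i) (u' j), fun i j => min_comm (u' i) (u' j)⟩ e)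
            + m * (edgesIn G S : ℝ) := by
        have : ∀ e ∈ G.edgeFinset,
            Sym2.lift ⟨fun i j => min (u i) (u j), fun i j => min_comm (u i) (u j)⟩ e
            = Sym2.lift ⟨fun i j => min (u' i) (u' j), fun i j => min_comm (u' i) (u' j)⟩ e
              + (if (∀ v ∈ e, v ∈ S) then m else 0) := by
          intro e _
          induction e using Sym2.ind with
          | _ i j => simpa using hedge i j
        rw [Finset.sum_congr rfl this, Finset.sum_add_distrib]
        congr 1
        rw [← Finset.sum_filter]
        unfold edgesIn
        rw [Finset.sum_const, nsmul_eq_mul, mul_comm]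
      -- split RHS sum
      have hrsplit : ∑ i, u i = (∑ i, u' i) + m * (S.card : ℝ) := by
        rw [show ∑ i, u i = ∑ i, (u' i + if 0 < u i then m else 0) from
          Finset.sum_congr rfl fun i _ => hvert i, Finset.sum_add_distrib]
        congr 1
        rw [← Finset.sum_filter, ← hSdef, Finset.sum_const, nsmul_eq_mul, mul_comm]
      have hih := ih u' hu' hcard'
      have hdens : m * (edgesIn G S : ℝ) ≤ m * (maxDensity G * (S.card : ℝ)) :=
        mul_le_mul_of_nonneg_left (edgesIn_le_density G S) hmpos.le
      rw [hsplit, hrsplit]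
      nlinarith [hih, hdens]
    · -- S empty: all u = 0
      have hz : ∀ i, u i = 0 := by
        intro i
        by_contra h
        exact hne ⟨i, by simp [hSdef, lt_of_le_of_ne (hu i) (Ne.symm h)]⟩
      have h1 : ∑ e ∈ G.edgeFinset,
          Sym2.lift ⟨fun i j => min (u i) (u j), fun i j => min_comm (u i) (u j)⟩ e = 0 := by
        apply Finset.sum_eq_zero
        intro e _
        induction e using Sym2.ind with
        | _ i j => simp [hz]
      rw [h1]
      have h2 : ∑ i, u i = 0 := Finset.sum_eq_zero fun i _ => hz i
      rw [h2, mul_zero]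

theorem stmt2 [Fintype V] (G : SimpleGraph V) (u : V → ℝ) (hu : ∀ i, 0 ≤ u i) :
    ∑ e ∈ G.edgeFinset,
        Sym2.lift ⟨fun i j => min (u i) (u j), fun i j => min_comm (u i) (u j)⟩ e
      ≤ maxDensity G * ∑ i, u i :=
  stmt2_aux G (univ.filter fun i => 0 < u i).card u hu le_rfl
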